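/- Let k ≥ 1 be an integer and set γ_k = ∑_{j=1}^{k} 1/j. Then there exists a real c > 0 such that for every positive integer n, n! / ∏_{m=0}^{n} ((1 + e^{−γ_k})·n − m) ≤ c · e^{γ_k·n} / (e^{γ_k} + 1)^{(1 + e^{−γ_k})·n}. -/

import Mathlib

open Real MeasureTheory

lemma log_sub_log_antitone (c : ℝ) (hc : 0 < c) {a b : ℝ} (ha : 1 ≤ a) (hab : a ≤ b) :
    Real.log (b + c) - Real.log b ≤ Real.log (a + c) - Real.log a := by
  have ha0 : (0:ℝ) < a := by linarith
  have hb0 : (0:ℝ) < b := by linarith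
  rw [sub_le_sub_iff, ← Real.log_mul (by linarith) (by linarith),
    ← Real.log_mul (by linarith) (by linarith)]
  apply Real.log_le_log (by nlinarith)
  nlinarith

lemma integrable_log_add (c : ℝ) (a b : ℝ) (h : ∀ x ∈ Set.uIcc a b, 0 < x + c) :
    IntervalIntegrable (fun x => Real.log (x + c)) volume a b := by
  apply ContinuousOn.intervalIntegrable
  exact ((continuous_id.add continuous_const).continuousOn).log
    (fun x hx => ne_of_gt (h x hx))

lemma integral_log_add (c : ℝ) (a b : ℝ) (ha : 0 < a + c) (hb : 0 < b + c) :
    ∫ x in a..b, Real.log (x + c)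
      = (b + c) * Real.log (b + c) - (a + c) * Real.log (a + c) - (b + c) + (a + c) := by
  rw [intervalIntegral.integral_comp_add_right (fun x => Real.log x) c]
  exact integral_log

lemma key_sum (c : ℝ) (hc : 0 < c) (n : ℕ) (hn : 1 ≤ n) :
    ((n : ℝ) + c) * Real.log ((n : ℝ) + c) - c * Real.log c - n * Real.log n
        - Real.log (1 + c) - 1
      ≤ ∑ j ∈ Finset.range n, (Real.log ((j : ℝ) + 1 + c) - Real.log ((j : ℝ) + 1)) := by
  have hn1 : (1 : ℝ) ≤ (n : ℝ) := by exact_mod_cast hn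
  have hnpos : (0 : ℝ) < n := by linarith
  -- sum ≥ integral over [1, 1+n]
  have hanti : AntitoneOn (fun x => Real.log (x + c) - Real.log x)
      (Set.Icc (1 : ℝ) (1 + (n : ℝ))) := by
    intro a ha b hb hab
    exact log_sub_log_antitone c hc ha.1 hab
  have h1 := hanti.integral_le_sum
  have hi1 : IntervalIntegrable (fun x => Real.log (x + c)) volume 1 (1 + (n:ℝ)) := by
    apply integrable_log_add
    intro x hx
    rw [Set.uIcc_of_le (by linarith)] at hx
    linarith [hx.1]
  have hi2 : IntervalIntegrable Real.log volume 1 (1 + (n:ℝ)) := by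
    apply ContinuousOn.intervalIntegrable
    apply Real.continuousOn_log.mono
    intro x hx
    rw [Set.uIcc_of_le (by linarith)] at hx
    simp only [Set.mem_compl_iff, Set.mem_singleton_iff]
    intro h; rw [h] at hx; linarith [hx.1]
  have hEq : ∫ x in (1:ℝ)..1 + (n:ℝ), (Real.log (x + c) - Real.log x)
      = ((n:ℝ) + 1 + c) * Real.log ((n:ℝ) + 1 + c) - (1 + c) * Real.log (1 + c)
        - ((n:ℝ) + 1) * Real.log ((n:ℝ) + 1) := by
    rw [intervalIntegral.integral_sub hi1 hi2,
      integral_log_add c 1 (1 + (n:ℝ)) (by linarith) (by linarith),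
      integral_log]
    rw [show (1:ℝ) + (n:ℝ) + c = (n:ℝ) + 1 + c from by ring,
      show (1:ℝ) + (n:ℝ) = (n:ℝ) + 1 from by ring]
    simp [Real.log_one]
    ring
  -- step A : convexity-type inequality
  have hiA1 : IntervalIntegrable (fun x => Real.log (x + c)) volume (n:ℝ) ((n:ℝ) + 1) := by
    apply integrable_log_add
    intro x hx
    rw [Set.uIcc_of_le (by linarith)] at hx
    linarith [hx.1]
  have hiA2 : IntervalIntegrable Real.log volume (n:ℝ) ((n:ℝ) + 1) := by
    apply ContinuousOn.intervalIntegrable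
    apply Real.continuousOn_log.mono
    intro x hx
    rw [Set.uIcc_of_le (by linarith)] at hx
    simp only [Set.mem_compl_iff, Set.mem_singleton_iff]
    intro h; rw [h] at hx; linarith [hx.1]
  have hstepA : 0 ≤ ((n:ℝ) + 1 + c) * Real.log ((n:ℝ) + 1 + c)
      - ((n:ℝ) + c) * Real.log ((n:ℝ) + c)
      - (((n:ℝ) + 1) * Real.log ((n:ℝ) + 1) - (n:ℝ) * Real.log (n:ℝ)) := by
    have h0 : 0 ≤ ∫ x in (n:ℝ)..((n:ℝ) + 1), (Real.log (x + c) - Real.log x) := by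
      apply intervalIntegral.integral_nonneg (by linarith)
      intro u hu
      have hu0 : 0 < u := lt_of_lt_of_le hnpos hu.1
      have := Real.log_le_log hu0 (by linarith : u ≤ u + c)
      linarith
    rw [intervalIntegral.integral_sub hiA1 hiA2,
      integral_log_add c (n:ℝ) ((n:ℝ) + 1) (by linarith) (by linarith),
      integral_log] at h0
    linarith
  -- step B
  have hB : Real.log (1 + c) - Real.log c ≤ 1 / c := by
    have h := Real.log_le_sub_one_of_pos (show (0:ℝ) < (1 + c) / c by positivity)
    rw [Real.log_div (by linarith) (ne_of_gt hc)] at h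
    have he : (1 + c) / c - 1 = 1 / c := by field_simp; ring
    linarith [he ▸ h]
  have hstepB : c * Real.log (1 + c) - c * Real.log c ≤ 1 := by
    have := mul_le_mul_of_nonneg_left hB hc.le
    have hcc : c * (1 / c) = 1 := by field_simp
    nlinarith
  -- rewrite the sum
  have hsum : ∑ i ∈ Finset.range n, (Real.log (1 + (i:ℝ) + c) - Real.log (1 + (i:ℝ)))
      = ∑ j ∈ Finset.range n, (Real.log ((j:ℝ) + 1 + c) - Real.log ((j:ℝ) + 1)) := by
    apply Finset.sum_congr rfl
    intro i _
    rw [show (1:ℝ) + (i:ℝ) + c = (i:ℝ) + 1 + c from by ring,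
      show (1:ℝ) + (i:ℝ) = (i:ℝ) + 1 from by ring]
  rw [hsum] at h1
  rw [hEq] at h1
  have hexp : ((1:ℝ) + c) * Real.log (1 + c)
      = Real.log (1 + c) + c * Real.log (1 + c) := by ring
  linarith


/-- The `k`-th harmonic number `γ_k = ∑_{j=1}^{k} 1/j`. -/
noncomputable def harmonic' (k : ℕ) : ℝ := ∑ j ∈ Finset.Icc 1 k, (1 : ℝ) / j

theorem stmt18 (k : ℕ) (hk : 1 ≤ k) :
    ∃ c : ℝ, 0 < c ∧ ∀ n : ℕ, 1 ≤ n →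
      (Nat.factorial n : ℝ) /
          (∏ m ∈ Finset.range (n + 1), ((1 + Real.exp (-harmonic' k)) * n - m)) ≤
        c * Real.exp (harmonic' k * n) /
          (Real.exp (harmonic' k) + 1) ^ ((1 + Real.exp (-harmonic' k)) * n) := by
  set γ := harmonic' k with hγdef
  have hγ : 0 < γ := by
    rw [hγdef, harmonic']
    apply Finset.sum_pos
    · intro j hj
      have h1 : 1 ≤ j := (Finset.mem_Icc.mp hj).1
      have : (0:ℝ) < j := by exact_mod_cast h1
      positivity
    · exact ⟨1, Finset.mem_Icc.mpr ⟨le_refl 1, hk⟩⟩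
  set α := Real.exp (-γ) with hαdef
  have hα : 0 < α := Real.exp_pos _
  have hlogα : Real.log α = -γ := Real.log_exp _
  refine ⟨Real.exp 1 * (1 + α) / α, by positivity, ?_⟩
  intro n hn
  have hn1 : (1:ℝ) ≤ (n:ℝ) := by exact_mod_cast hn
  have hnpos : (0:ℝ) < n := by linarith
  have hnne : (n:ℝ) ≠ 0 := ne_of_gt hnpos
  have hc : (0:ℝ) < α * n := by positivity
  -- rewrite the product
  have hP : ∏ m ∈ Finset.range (n+1), ((1 + α) * n - m)
      = (∏ j ∈ Finset.range n, (α * n + ((j:ℝ) + 1))) * (α * n) := by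
    rw [← Finset.prod_range_reflect]
    rw [Finset.prod_range_succ']
    congr 1
    · apply Finset.prod_congr rfl
      intro j hj
      have hj' : j < n := Finset.mem_range.mp hj
      have hjle : j + 1 ≤ n := hj'
      rw [show n + 1 - 1 - (j + 1) = n - (j+1) from by omega]
      rw [Nat.cast_sub hjle]
      push_cast
      ring
    · rw [show n + 1 - 1 - 0 = n from by omega]
      ring
  have hPpos : (0:ℝ) < ∏ m ∈ Finset.range (n+1), ((1 + α) * n - m) := by
    rw [hP]
    apply mul_pos _ hc
    apply Finset.prod_pos
    intro j _
    positivity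
  have hDpos : (0:ℝ) < (Real.exp γ + 1) ^ ((1 + α) * n) :=
    Real.rpow_pos_of_pos (by positivity) _
  have hfactpos : (0:ℝ) < (Nat.factorial n : ℝ) := by
    exact_mod_cast Nat.factorial_pos n
  rw [div_le_div_iff₀ hPpos hDpos]
  apply (Real.log_le_log_iff (by positivity) (by positivity)).mp
  -- expand all the logarithms
  have hlogfact : Real.log (Nat.factorial n : ℝ)
      = ∑ j ∈ Finset.range n, Real.log ((j:ℝ) + 1) := by
    rw [← Finset.prod_range_add_one_eq_factorial]
    push_cast
    rw [Real.log_prod]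
    intro j _
    positivity
  have hbase : Real.exp γ + 1 = Real.exp γ * (1 + α) := by
    rw [mul_add, mul_one, hαdef, ← Real.exp_add]
    simp
  have hlogD : Real.log ((Real.exp γ + 1) ^ ((1 + α) * n))
      = (1 + α) * n * (γ + Real.log (1 + α)) := by
    rw [Real.log_rpow (by positivity), hbase,
      Real.log_mul (Real.exp_ne_zero _) (by positivity), Real.log_exp]
  have hlogP : Real.log (∏ m ∈ Finset.range (n+1), ((1 + α) * n - m))
      = (∑ j ∈ Finset.range n, Real.log (α * n + ((j:ℝ) + 1)))
        + (-γ + Real.log n) := by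
    rw [hP, Real.log_mul (by positivity) (ne_of_gt hc), Real.log_prod,
      Real.log_mul (ne_of_gt hα) hnne, hlogα]
    intro j _
    positivity
  have hlogc : Real.log (Real.exp 1 * (1 + α) / α)
      = 1 + Real.log (1 + α) + γ := by
    rw [Real.log_div (by positivity) (ne_of_gt hα),
      Real.log_mul (Real.exp_ne_zero _) (by positivity), Real.log_exp, hlogα]
    ring
  rw [Real.log_mul (ne_of_gt hfactpos) (ne_of_gt hDpos),
    Real.log_mul (by positivity) (ne_of_gt hPpos),
    Real.log_mul (by positivity) (Real.exp_ne_zero _),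
    hlogfact, hlogD, hlogP, hlogc, Real.log_exp]
  -- bring in the key sum inequality
  have key := key_sum (α * n) hc n hn
  rw [show (n:ℝ) + α * n = (1 + α) * n from by ring] at key
  rw [Real.log_mul (by positivity : (1:ℝ) + α ≠ 0) hnne,
    Real.log_mul (ne_of_gt hα) hnne, hlogα] at key
  have hsumkey : ∑ j ∈ Finset.range n,
        (Real.log ((j:ℝ) + 1 + α * n) - Real.log ((j:ℝ) + 1))
      = (∑ j ∈ Finset.range n, Real.log (α * n + ((j:ℝ) + 1)))
        - ∑ j ∈ Finset.range n, Real.log ((j:ℝ) + 1) := by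
    rw [← Finset.sum_sub_distrib]
    apply Finset.sum_congr rfl
    intro j _
    rw [show (j:ℝ) + 1 + α * n = α * n + ((j:ℝ) + 1) from by ring]
  rw [hsumkey] at key
  have hlog1αn : Real.log (1 + α * n) ≤ Real.log (1 + α) + Real.log n := by
    have h1 : Real.log (1 + α * n) ≤ Real.log ((1 + α) * n) := by
      apply Real.log_le_log (by positivity)
      nlinarith
    rwa [Real.log_mul (by positivity : (1:ℝ) + α ≠ 0) hnne] at h1
  nlinarith [key, hlog1αn]
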